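/- Let α ∈ (0,2), β ∈ (−1,1), let σ : ℝ → (0,∞) be a continuously differentiable, strictly increasing bijection from ℝ onto (0,∞), and let h : ℝ → ℝ be continuous with ∫_ℝ |h(x)| σ′(x) dx < ∞. Then the function z ↦ z|z|^α h(σ^{−1}(|z|)) is ν_{α,β}-integrable and ∫_{ℝ∖{0}} z|z|^α h(σ^{−1}(|z|)) ν_{α,β}(dz) = β C_α ∫_ℝ h(x) σ′(x) dx. -/

import Mathlib

open MeasureTheory Real Set Filter Topology
open scoped NNReal ENNReal

/-- The constant `C_α`: `α(1-α)/(Γ(2-α)cos(πα/2))` for `α ≠ 1`, and `2/π` for `α = 1`. -/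
noncomputable def Calpha (α : ℝ) : ℝ :=
  if α = 1 then 2 / π else α * (1 - α) / (Real.Gamma (2 - α) * Real.cos (π * α / 2))

/-- `C_p(β) = C_α (1+β)/2`. -/
noncomputable def Cp (α β : ℝ) : ℝ := Calpha α * (1 + β) / 2

/-- `C_n(β) = C_α (1-β)/2`. -/
noncomputable def Cn (α β : ℝ) : ℝ := Calpha α * (1 - β) / 2

/-- The asymmetric Lévy measure
`ν_{α,β}(dy) = (C_p(β)1_{(0,∞)}(y) + C_n(β)1_{(-∞,0)}(y)) |y|^{-1-α} dy` on `ℝ ∖ {0}`. -/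
noncomputable def nuAsym (α β : ℝ) : Measure ℝ :=
  (volume.restrict {(0:ℝ)}ᶜ).withDensity fun y =>
    ENNReal.ofReal ((if 0 < y then Cp α β else Cn α β) * |y| ^ (-(1 + α)))

lemma aux_deriv_nonneg {f : ℝ → ℝ} (hm : Monotone f) (x : ℝ) : 0 ≤ deriv f x := by
  by_cases hd : DifferentiableAt ℝ f x
  · have hda := hd.hasDerivAt
    have h1 : Tendsto (slope f x) (𝓝[>] x) (𝓝 (deriv f x)) :=
      (hasDerivAt_iff_tendsto_slope.mp hda).mono_left
        (nhdsWithin_mono _ (fun y hy => ne_of_gt hy))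
    refine ge_of_tendsto h1 ?_
    filter_upwards [self_mem_nhdsWithin] with y hy
    rw [slope_def_field]
    exact div_nonneg (sub_nonneg.2 (hm hy.le)) (sub_nonneg.2 hy.le)
  · rw [deriv_zero_of_not_differentiableAt hd]

lemma aux_Calpha_pos {α : ℝ} (hα : α ∈ Set.Ioo (0:ℝ) 2) : 0 < Calpha α := by
  obtain ⟨h0, h2⟩ := hα
  unfold Calpha
  split_ifs with h1
  · positivity
  · have hg : 0 < Real.Gamma (2 - α) := Real.Gamma_pos_of_pos (by linarith)
    rcases lt_or_gt_of_ne h1 with hlt | hgt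
    · have hc : 0 < Real.cos (π * α / 2) := by
        apply Real.cos_pos_of_mem_Ioo
        constructor
        · nlinarith [pi_pos]
        · nlinarith [pi_pos]
      exact div_pos (by nlinarith) (by positivity)
    · have hc : Real.cos (π * α / 2) < 0 := by
        apply Real.cos_neg_of_pi_div_two_lt_of_lt
        · nlinarith [pi_pos]
        · nlinarith [pi_pos]
      apply div_pos_of_neg_of_neg (by nlinarith)
      exact mul_neg_of_pos_of_neg hg hc

lemma aux_cov (σ : ℝ → ℝ) (hσC : ContDiff ℝ 1 σ) (hσm : StrictMono σ)
    (hσr : Set.range σ = Set.Ioi 0)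
    (h : ℝ → ℝ) (hh : Continuous h)
    (hint : Integrable (fun x => |h x| * deriv σ x)) :
    IntegrableOn (fun z => h (Function.invFun σ z)) (Ioi 0) ∧
    ∫ z in Ioi 0, h (Function.invFun σ z) = ∫ x, h x * deriv σ x := by
  have hσd : Differentiable ℝ σ := hσC.differentiable one_ne_zero
  have hσ'c : Continuous (deriv σ) := hσC.continuous_deriv le_rfl
  have hσ'nn : ∀ x, 0 ≤ deriv σ x := fun x => aux_deriv_nonneg hσm.monotone x
  have hLI : Function.LeftInverse (Function.invFun σ) σ :=
    Function.leftInverse_invFun hσm.injective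
  set φ : ℝ → ℝ := fun z => h (Function.invFun σ z) with hφ
  have himg : σ '' univ = Ioi 0 := by rw [image_univ, hσr]
  have hderiv : ∀ x ∈ (univ : Set ℝ), HasDerivWithinAt σ (deriv σ x) univ x :=
    fun x _ => (hσd x).hasDerivAt.hasDerivWithinAt
  have hpull : (fun x => |deriv σ x| • φ (σ x)) = fun x => h x * deriv σ x := by
    funext x
    simp only [hφ, hLI x, smul_eq_mul, abs_of_nonneg (hσ'nn x)]
    ring
  have hint2 : Integrable (fun x => h x * deriv σ x) := by
    refine hint.mono' ((hh.mul hσ'c).aestronglyMeasurable) ?_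
    filter_upwards with x
    rw [Real.norm_eq_abs, abs_mul, abs_of_nonneg (hσ'nn x)]
  constructor
  · have := integrableOn_image_iff_integrableOn_abs_deriv_smul MeasurableSet.univ hderiv
      hσm.injective.injOn φ
    rw [himg, hpull] at this
    rw [this, IntegrableOn, Measure.restrict_univ]
    exact hint2
  · rw [← himg, integral_image_eq_integral_abs_deriv_smul MeasurableSet.univ hderiv
      hσm.injective.injOn φ, Measure.restrict_univ, hpull]

lemma aux_reflect {φ : ℝ → ℝ} (hφ : IntegrableOn φ (Ioi (0:ℝ))) :
    IntegrableOn (fun z => φ (-z)) (Iio (0:ℝ)) := by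
  have A : MeasurableEmbedding (fun x : ℝ => -x) :=
    (Homeomorph.neg ℝ).isClosedEmbedding.measurableEmbedding
  have hp : MeasurePreserving (fun x : ℝ => -x)
      (volume.restrict ((fun x : ℝ => -x) ⁻¹' (Ioi 0))) (volume.restrict (Ioi 0)) :=
    (Measure.measurePreserving_neg _).restrict_preimage measurableSet_Ioi
  have hpre : (fun x : ℝ => -x) ⁻¹' (Ioi 0) = Iio 0 := by
    ext x; simp
  rw [hpre] at hp
  exact (hp.integrable_comp_emb A).mpr hφ

/-- for `σ : ℝ → (0,∞)` a `C¹` strictly increasing bijection onto `(0,∞)`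
and `h` continuous with `∫ |h| σ' < ∞`, the function `z ↦ z|z|^α h(σ⁻¹(|z|))` is
`ν_{α,β}`-integrable and its integral equals `β C_α ∫ h(x) σ'(x) dx`. -/
theorem stmt_8 (α β : ℝ) (hα : α ∈ Set.Ioo (0:ℝ) 2) (hβ : β ∈ Set.Ioo (-1:ℝ) 1)
    (σ : ℝ → ℝ) (hσC : ContDiff ℝ 1 σ) (hσm : StrictMono σ)
    (hσr : Set.range σ = Set.Ioi 0)
    (h : ℝ → ℝ) (hh : Continuous h)
    (hint : Integrable (fun x => |h x| * deriv σ x)) :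
    Integrable (fun z => z * |z| ^ α * h (Function.invFun σ |z|)) (nuAsym α β) ∧
    ∫ z, z * |z| ^ α * h (Function.invFun σ |z|) ∂(nuAsym α β)
      = β * Calpha α * ∫ x, h x * deriv σ x := by
  obtain ⟨hα0, hα2⟩ := hα
  obtain ⟨hβn, hβp⟩ := hβ
  have hCα := aux_Calpha_pos ⟨hα0, hα2⟩
  have hCp : 0 ≤ Cp α β := by unfold Cp; nlinarith
  have hCn : 0 ≤ Cn α β := by unfold Cn; nlinarith
  obtain ⟨hφint, hI⟩ := aux_cov σ hσC hσm hσr h hh hint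
  set φ : ℝ → ℝ := fun z => h (Function.invFun σ z) with hφdef
  set D : ℝ → ℝ≥0 := fun z => ((if 0 < z then Cp α β else Cn α β) * |z| ^ (-(1+α))).toNNReal
    with hD
  have hDnn : ∀ z : ℝ, 0 ≤ (if 0 < z then Cp α β else Cn α β) * |z| ^ (-(1+α)) := by
    intro z
    have : 0 ≤ (if 0 < z then Cp α β else Cn α β) := by split_ifs <;> assumption
    positivity
  have hDmeas : Measurable D := by
    apply Measurable.real_toNNReal
    apply Measurable.mul
    · exact Measurable.ite measurableSet_Ioi measurable_const measurable_const
    · have habs : (fun z : ℝ => |z| ^ (-(1+α)))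
          = fun z => if z = 0 then (0:ℝ) ^ (-(1+α)) else Real.exp (Real.log |z| * (-(1+α))) := by
        funext z
        split_ifs with hz
        · simp [hz]
        · rw [Real.rpow_def_of_pos (abs_pos.2 hz)]
      rw [habs]
      exact Measurable.ite (measurableSet_eq)
        measurable_const
        (Real.measurable_exp.comp ((Real.measurable_log.comp continuous_abs.measurable).mul
          measurable_const))
  have hnu : nuAsym α β = volume.withDensity (fun z => (D z : ℝ≥0∞)) := by
    unfold nuAsym
    rw [MeasureTheory.restrict_compl_singleton]
    rfl
  set k : ℝ → ℝ := fun z => if 0 < z then Cp α β * φ z else -(Cn α β * φ (-z)) with hk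
  have hae : (fun z : ℝ => D z • (z * |z| ^ α * h (Function.invFun σ |z|))) =ᵐ[volume] k := by
    have h0 : ∀ᵐ z : ℝ, z ≠ (0:ℝ) := by
      refine ae_iff.mpr ?_
      simp only [ne_eq, not_not]
      simp [Real.volume_singleton]
    filter_upwards [h0] with z hz
    simp only [NNReal.smul_def, hD, Real.coe_toNNReal _ (hDnn z), smul_eq_mul, hk, hφdef]
    rcases (Ne.lt_or_gt hz) with hneg | hpos
    · have hnz : (0:ℝ) < -z := by linarith
      rw [if_neg (not_lt.2 hneg.le), if_neg (not_lt.2 hneg.le), abs_of_neg hneg]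
      have e1 : (-z) ^ (-(1+α)) * ((-z) ^ (1+α)) = 1 := by
        rw [← Real.rpow_add hnz, show -(1+α) + (1+α) = (0:ℝ) by ring, Real.rpow_zero]
      have e2 : z * (-z) ^ α = -((-z) ^ (1+α)) := by
        rw [Real.rpow_add hnz, Real.rpow_one]
        ring
      rw [mul_assoc]
      rw [show z * (-z) ^ α * h (Function.invFun σ (-z))
          = -((-z) ^ (1+α)) * h (Function.invFun σ (-z)) by rw [e2]]
      linear_combination (-(Cn α β * h (Function.invFun σ (-z)))) * e1
    · rw [if_pos hpos, if_pos hpos, abs_of_pos hpos]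
      have e1 : z ^ (-(1+α)) * (z ^ (1+α)) = 1 := by
        rw [← Real.rpow_add hpos, show -(1+α) + (1+α) = (0:ℝ) by ring, Real.rpow_zero]
      have e2 : z * z ^ α = z ^ (1+α) := by
        rw [Real.rpow_add hpos, Real.rpow_one]
      rw [mul_assoc]
      rw [show z * z ^ α * h (Function.invFun σ z)
          = z ^ (1+α) * h (Function.invFun σ z) by rw [e2]]
      linear_combination (Cp α β * h (Function.invFun σ z)) * e1
  have hkIoi : IntegrableOn k (Ioi (0:ℝ)) := by
    apply Integrable.congr (hφint.const_mul (Cp α β))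
    filter_upwards [ae_restrict_mem measurableSet_Ioi] with z hz
    rw [hk]
    simp only [if_pos (mem_Ioi.mp hz)]
  have hkIio : IntegrableOn k (Iio (0:ℝ)) := by
    have hrefl : IntegrableOn (fun z => φ (-z)) (Iio (0:ℝ)) := aux_reflect hφint
    apply Integrable.congr ((hrefl.const_mul (Cn α β)).neg)
    filter_upwards [ae_restrict_mem measurableSet_Iio] with z hz
    rw [hk]
    simp only [Pi.neg_apply, if_neg (not_lt.2 (le_of_lt (mem_Iio.mp hz)))]
  have hkint : Integrable k := by
    have hu := hkIio.union hkIoi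
    rw [Set.Iio_union_Ioi] at hu
    rwa [IntegrableOn, MeasureTheory.restrict_compl_singleton] at hu
  have hgint : Integrable (fun z => z * |z| ^ α * h (Function.invFun σ |z|)) (nuAsym α β) := by
    rw [hnu, integrable_withDensity_iff_integrable_smul hDmeas]
    exact hkint.congr hae.symm
  refine ⟨hgint, ?_⟩
  rw [hnu, integral_withDensity_eq_integral_smul hDmeas, integral_congr_ae hae]
  have hsplit : ∫ z, k z = (∫ z in Iic (0:ℝ), k z) + ∫ z in Ioi (0:ℝ), k z := by
    rw [← compl_Iic]
    exact (integral_add_compl measurableSet_Iic hkint).symm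
  have hIoi : ∫ z in Ioi (0:ℝ), k z = Cp α β * ∫ z in Ioi (0:ℝ), φ z := by
    rw [← integral_const_mul]
    apply setIntegral_congr_fun measurableSet_Ioi
    intro z hz
    rw [hk]
    simp only [if_pos (mem_Ioi.mp hz)]
  have hIic : ∫ z in Iic (0:ℝ), k z = -(Cn α β * ∫ z in Ioi (0:ℝ), φ z) := by
    have h1 : ∫ z in Iic (0:ℝ), k z = ∫ z in Iic (0:ℝ), -(Cn α β * φ (-z)) := by
      apply setIntegral_congr_fun measurableSet_Iic
      intro z hz
      rw [hk]
      simp only [if_neg (not_lt.2 (mem_Iic.mp hz))]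
    rw [h1, integral_neg, neg_inj]
    rw [show (fun z => Cn α β * φ (-z)) = fun z => (fun y => Cn α β * φ y) (-z) from rfl]
    rw [integral_comp_neg_Iic 0 (fun y => Cn α β * φ y)]
    rw [neg_zero, integral_const_mul]
  rw [hsplit, hIoi, hIic, hI]
  unfold Cp Cn
  ring
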